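/- Let T > 0, γ, M ∈ ℝ, and let B : (0,T)×ℝ² → ℝ, v_S, v_L : (0,T)×ℝ² → ℝ², P : (0,T)×ℝ² → ℝ and Γ_B : (0,T)×ℝ² → ℝ be C³ functions with 0 < B < 1 everywhere, satisfying on (0,T)×ℝ²: ∂ₜB + ∇·(B v_S) = Γ_B; ∂ₜv_S + (v_S·∇)v_S + γ∇B/B + ∇P = (M+Γ_B)(v_L−v_S)/B; ∂ₜv_L + (v_L·∇)v_L + ∇P = M(v_S−v_L)/(1−B); and ∇·(B v_S + (1−B) v_L) = 0. Then, with w := B v_S + (1−B) v_L and z := v_S − v_L, the pressure P satisfies the elliptic equation ΔP = − Σ_{i,j=1}^{2} ∂_{x_j}w_i · ∂_{x_i}w_j − Σ_{i,j=1}^{2} ∂_{x_i}∂_{x_j}(B(1−B) z_i z_j) − γΔB on (0,T)×ℝ². -/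

import Mathlib

open Filter Topology

noncomputable def pd (v : ℝ × ℝ × ℝ) (f : ℝ × ℝ × ℝ → ℝ) (p : ℝ × ℝ × ℝ) : ℝ := fderiv ℝ f p v

lemma pd_add {f g : ℝ × ℝ × ℝ → ℝ} {p : ℝ × ℝ × ℝ} (v : ℝ × ℝ × ℝ)
    (hf : DifferentiableAt ℝ f p) (hg : DifferentiableAt ℝ g p) :
    pd v (fun q => f q + g q) p = pd v f p + pd v g p := by
  unfold pd; rw [fderiv_fun_add hf hg]; rfl

lemma pd_sub {f g : ℝ × ℝ × ℝ → ℝ} {p : ℝ × ℝ × ℝ} (v : ℝ × ℝ × ℝ)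
    (hf : DifferentiableAt ℝ f p) (hg : DifferentiableAt ℝ g p) :
    pd v (fun q => f q - g q) p = pd v f p - pd v g p := by
  unfold pd; rw [fderiv_fun_sub hf hg]; rfl

lemma pd_mul {f g : ℝ × ℝ × ℝ → ℝ} {p : ℝ × ℝ × ℝ} (v : ℝ × ℝ × ℝ)
    (hf : DifferentiableAt ℝ f p) (hg : DifferentiableAt ℝ g p) :
    pd v (fun q => f q * g q) p = pd v f p * g p + f p * pd v g p := by
  unfold pd; rw [fderiv_fun_mul hf hg]; simp; ring

lemma pd_const (v : ℝ × ℝ × ℝ) (c : ℝ) (p : ℝ × ℝ × ℝ) : pd v (fun _ => c) p = 0 := by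
  simp [pd]

lemma pd_const_mul {f : ℝ × ℝ × ℝ → ℝ} {p : ℝ × ℝ × ℝ} (v : ℝ × ℝ × ℝ) (c : ℝ)
    (hf : DifferentiableAt ℝ f p) :
    pd v (fun q => c * f q) p = c * pd v f p := by
  unfold pd; rw [fderiv_const_mul hf]; rfl

lemma pd_congr {f g : ℝ × ℝ × ℝ → ℝ} {p : ℝ × ℝ × ℝ} (v : ℝ × ℝ × ℝ)
    (h : f =ᶠ[𝓝 p] g) : pd v f p = pd v g p := by
  unfold pd; rw [h.fderiv_eq]

lemma pd_zero_ev {f : ℝ × ℝ × ℝ → ℝ} {p : ℝ × ℝ × ℝ} (v : ℝ × ℝ × ℝ)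
    (h : f =ᶠ[𝓝 p] fun _ => 0) : pd v f p = 0 := by
  rw [pd_congr v h, pd_const]

lemma contDiffAt_pd {f : ℝ × ℝ × ℝ → ℝ} {p : ℝ × ℝ × ℝ} (v : ℝ × ℝ × ℝ) {n : ℕ}
    (hf : ContDiffAt ℝ (n + 1) f p) : ContDiffAt ℝ n (pd v f) p := by
  have h := hf.fderiv_right (m := n) (by exact_mod_cast le_rfl)
  exact h.clm_apply contDiffAt_const

lemma diff_pd {f : ℝ × ℝ × ℝ → ℝ} {p : ℝ × ℝ × ℝ} (v : ℝ × ℝ × ℝ)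
    (hf : ContDiffAt ℝ 2 f p) : DifferentiableAt ℝ (pd v f) p := by
  have : ContDiffAt ℝ (1 + 1 : ℕ) f p := by exact_mod_cast hf
  exact ((contDiffAt_pd v this).differentiableAt (by simp))

lemma pd_comm {f : ℝ × ℝ × ℝ → ℝ} {p : ℝ × ℝ × ℝ} (u v : ℝ × ℝ × ℝ)
    (hf : ContDiffAt ℝ 2 f p) : pd u (pd v f) p = pd v (pd u f) p := by
  have hsymm : IsSymmSndFDerivAt ℝ f p := hf.isSymmSndFDerivAt (by simp [minSmoothness_of_isRCLikeNormedField])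
  have hdf : DifferentiableAt ℝ (fderiv ℝ f) p :=
    (hf.fderiv_right (m := 1) (by exact_mod_cast le_rfl)).differentiableAt
      (by simp)
  have key : ∀ a b : ℝ × ℝ × ℝ, pd a (pd b f) p = fderiv ℝ (fderiv ℝ f) p a b := by
    intro a b
    have : pd b f = fun q => (fderiv ℝ f q) b := rfl
    rw [this]
    show fderiv ℝ (fun q => (fderiv ℝ f q) ((fun _ => b) q)) p a = _
    rw [fderiv_clm_apply hdf (differentiableAt_const b)]
    simp
  rw [key, key]
  exact hsymm u v

lemma pd_pd_mul {S : Set (ℝ × ℝ × ℝ)} (hS : IsOpen S) {p : ℝ × ℝ × ℝ} (hp : p ∈ S)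
    (u v : ℝ × ℝ × ℝ) {f g : ℝ × ℝ × ℝ → ℝ}
    (hfd : ∀ q ∈ S, DifferentiableAt ℝ f q) (hgd : ∀ q ∈ S, DifferentiableAt ℝ g q)
    (hf2 : ContDiffAt ℝ 2 f p) (hg2 : ContDiffAt ℝ 2 g p) :
    pd u (pd v (fun r => f r * g r)) p =
      pd u (pd v f) p * g p + pd v f p * pd u g p + pd u f p * pd v g p
        + f p * pd u (pd v g) p := by
  have hfp : DifferentiableAt ℝ f p := hfd p hp
  have hgp : DifferentiableAt ℝ g p := hgd p hp
  have hdf : DifferentiableAt ℝ (pd v f) p := diff_pd v hf2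
  have hdg : DifferentiableAt ℝ (pd v g) p := diff_pd v hg2
  have hev : pd v (fun r => f r * g r) =ᶠ[𝓝 p] fun q => pd v f q * g q + f q * pd v g q := by
    filter_upwards [hS.mem_nhds hp] with q hq
    exact pd_mul v (hfd q hq) (hgd q hq)
  rw [pd_congr u hev, pd_add (f := fun q => pd v f q * g q) (g := fun q => f q * pd v g q) u (hdf.mul hgp) (hfp.mul hdg), pd_mul u hdf hgp, pd_mul u hfp hdg]
  ring

lemma auxF (dt dx dy : ℝ × ℝ × ℝ) (γ M : ℝ)
    (B vS1 vS2 vL1 vL2 P ΓB : ℝ × ℝ × ℝ → ℝ) (q : ℝ × ℝ × ℝ)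
    (hBd : DifferentiableAt ℝ B q) (hS1d : DifferentiableAt ℝ vS1 q)
    (hS2d : DifferentiableAt ℝ vS2 q) (hL1d : DifferentiableAt ℝ vL1 q)
    (hL2d : DifferentiableAt ℝ vL2 q)
    (hmass : pd dt B q + (pd dx B q * vS1 q + B q * pd dx vS1 q)
      + (pd dy B q * vS2 q + B q * pd dy vS2 q) = ΓB q)
    (hS1 : B q * pd dt vS1 q + B q * (vS1 q * pd dx vS1 q + vS2 q * pd dy vS1 q)
      + γ * pd dx B q + B q * pd dx P q = (M + ΓB q) * (vL1 q - vS1 q))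
    (hL1 : (1 - B q) * pd dt vL1 q + (1 - B q) * (vL1 q * pd dx vL1 q + vL2 q * pd dy vL1 q)
      + (1 - B q) * pd dx P q = M * (vS1 q - vL1 q))
    (hdiv : (pd dx B q * vS1 q + B q * pd dx vS1 q - pd dx B q * vL1 q + (1 - B q) * pd dx vL1 q)
      + (pd dy B q * vS2 q + B q * pd dy vS2 q - pd dy B q * vL2 q + (1 - B q) * pd dy vL2 q)
      = 0) :
    pd dt (fun r => B r * vS1 r + (1 - B r) * vL1 r) q
    + pd dx (fun r => (B r * vS1 r + (1 - B r) * vL1 r) * (B r * vS1 r + (1 - B r) * vL1 r)) q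
    + pd dx (fun r => B r * (1 - B r) * (vS1 r - vL1 r) * (vS1 r - vL1 r)) q
    + pd dy (fun r => (B r * vS2 r + (1 - B r) * vL2 r) * (B r * vS1 r + (1 - B r) * vL1 r)) q
    + pd dy (fun r => B r * (1 - B r) * (vS2 r - vL2 r) * (vS1 r - vL1 r)) q
    + γ * pd dx B q + pd dx P q = 0 := by
  simp (disch := fun_prop) only [pd_mul, pd_add, pd_sub, pd_const]
  linear_combination hS1 + hL1 + (vS1 q - vL1 q) * hmass + vL1 q * hdiv

/-- Partial derivative in the time variable `t` of a function on `(t, x₁, x₂)`-space. -/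
noncomputable def pdt (f : ℝ × ℝ × ℝ → ℝ) (p : ℝ × ℝ × ℝ) : ℝ :=
  fderiv ℝ f p (1, 0, 0)

/-- Partial derivative in the first spatial variable `x₁`. -/
noncomputable def pdx (f : ℝ × ℝ × ℝ → ℝ) (p : ℝ × ℝ × ℝ) : ℝ :=
  fderiv ℝ f p (0, 1, 0)

/-- Partial derivative in the second spatial variable `x₂`. -/
noncomputable def pdy (f : ℝ × ℝ × ℝ → ℝ) (p : ℝ × ℝ × ℝ) : ℝ :=
  fderiv ℝ f p (0, 0, 1)

/-- The space-time domain `(0,T) × ℝ²`, viewed as a subset of `ℝ × ℝ × ℝ`. -/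
def dom (T : ℝ) : Set (ℝ × ℝ × ℝ) := {p | 0 < p.1 ∧ p.1 < T}

lemma pdt_eq : pdt = pd (1, 0, 0) := rfl
lemma pdx_eq : pdx = pd (0, 1, 0) := rfl
lemma pdy_eq : pdy = pd (0, 0, 1) := rfl

lemma isOpen_dom (T : ℝ) : IsOpen (dom T) := by
  have h : dom T = Prod.fst ⁻¹' Set.Ioo 0 T := by
    ext q; simp [dom, Set.mem_Ioo]
  rw [h]; exact isOpen_Ioo.preimage continuous_fst

theorem stmt9 (T γ M : ℝ) (hT : 0 < T)
    (B vS1 vS2 vL1 vL2 P ΓB : ℝ × ℝ × ℝ → ℝ)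
    (hBreg : ContDiffOn ℝ 3 B (dom T)) (hvS1 : ContDiffOn ℝ 3 vS1 (dom T))
    (hvS2 : ContDiffOn ℝ 3 vS2 (dom T)) (hvL1 : ContDiffOn ℝ 3 vL1 (dom T))
    (hvL2 : ContDiffOn ℝ 3 vL2 (dom T)) (hP : ContDiffOn ℝ 3 P (dom T))
    (hΓ : ContDiffOn ℝ 3 ΓB (dom T))
    (hB0 : ∀ p ∈ dom T, 0 < B p) (hB1 : ∀ p ∈ dom T, B p < 1)
    (hmass : ∀ p ∈ dom T,
      pdt B p + pdx (fun q => B q * vS1 q) p + pdy (fun q => B q * vS2 q) p = ΓB p)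
    (hmomS1 : ∀ p ∈ dom T,
      pdt vS1 p + (vS1 p * pdx vS1 p + vS2 p * pdy vS1 p) + γ * pdx B p / B p + pdx P p =
        (M + ΓB p) * (vL1 p - vS1 p) / B p)
    (hmomS2 : ∀ p ∈ dom T,
      pdt vS2 p + (vS1 p * pdx vS2 p + vS2 p * pdy vS2 p) + γ * pdy B p / B p + pdy P p =
        (M + ΓB p) * (vL2 p - vS2 p) / B p)
    (hmomL1 : ∀ p ∈ dom T,
      pdt vL1 p + (vL1 p * pdx vL1 p + vL2 p * pdy vL1 p) + pdx P p =
        M * (vS1 p - vL1 p) / (1 - B p))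
    (hmomL2 : ∀ p ∈ dom T,
      pdt vL2 p + (vL1 p * pdx vL2 p + vL2 p * pdy vL2 p) + pdy P p =
        M * (vS2 p - vL2 p) / (1 - B p))
    (hdiv : ∀ p ∈ dom T,
      pdx (fun q => B q * vS1 q + (1 - B q) * vL1 q) p +
        pdy (fun q => B q * vS2 q + (1 - B q) * vL2 q) p = 0)
    (w1 w2 z1 z2 : ℝ × ℝ × ℝ → ℝ)
    (hw1 : w1 = fun q => B q * vS1 q + (1 - B q) * vL1 q)
    (hw2 : w2 = fun q => B q * vS2 q + (1 - B q) * vL2 q)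
    (hz1 : z1 = fun q => vS1 q - vL1 q) (hz2 : z2 = fun q => vS2 q - vL2 q) :
    ∀ p ∈ dom T,
      pdx (pdx P) p + pdy (pdy P) p =
        -(pdx w1 p * pdx w1 p + pdy w1 p * pdx w2 p +
          pdx w2 p * pdy w1 p + pdy w2 p * pdy w2 p)
        - (pdx (pdx (fun q => B q * (1 - B q) * z1 q * z1 q)) p +
           pdx (pdy (fun q => B q * (1 - B q) * z1 q * z2 q)) p +
           pdy (pdx (fun q => B q * (1 - B q) * z2 q * z1 q)) p +
           pdy (pdy (fun q => B q * (1 - B q) * z2 q * z2 q)) p)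
        - γ * (pdx (pdx B) p + pdy (pdy B) p) := by
  subst hw1 hw2 hz1 hz2
  have hO : IsOpen (dom T) := isOpen_dom T
  simp only [pdt_eq, pdx_eq, pdy_eq] at hmass hmomS1 hmomS2 hmomL1 hmomL2 hdiv ⊢
  -- regularity at points of the domain
  have cdB : ∀ q ∈ dom T, ContDiffAt ℝ 3 B q := fun q hq => hBreg.contDiffAt (hO.mem_nhds hq)
  have cdS1 : ∀ q ∈ dom T, ContDiffAt ℝ 3 vS1 q := fun q hq => hvS1.contDiffAt (hO.mem_nhds hq)
  have cdS2 : ∀ q ∈ dom T, ContDiffAt ℝ 3 vS2 q := fun q hq => hvS2.contDiffAt (hO.mem_nhds hq)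
  have cdL1 : ∀ q ∈ dom T, ContDiffAt ℝ 3 vL1 q := fun q hq => hvL1.contDiffAt (hO.mem_nhds hq)
  have cdL2 : ∀ q ∈ dom T, ContDiffAt ℝ 3 vL2 q := fun q hq => hvL2.contDiffAt (hO.mem_nhds hq)
  have cdP : ∀ q ∈ dom T, ContDiffAt ℝ 3 P q := fun q hq => hP.contDiffAt (hO.mem_nhds hq)
  have dB : ∀ q ∈ dom T, DifferentiableAt ℝ B q :=
    fun q hq => (cdB q hq).differentiableAt (by norm_num)
  have dS1 : ∀ q ∈ dom T, DifferentiableAt ℝ vS1 q :=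
    fun q hq => (cdS1 q hq).differentiableAt (by norm_num)
  have dS2 : ∀ q ∈ dom T, DifferentiableAt ℝ vS2 q :=
    fun q hq => (cdS2 q hq).differentiableAt (by norm_num)
  have dL1 : ∀ q ∈ dom T, DifferentiableAt ℝ vL1 q :=
    fun q hq => (cdL1 q hq).differentiableAt (by norm_num)
  have dL2 : ∀ q ∈ dom T, DifferentiableAt ℝ vL2 q :=
    fun q hq => (cdL2 q hq).differentiableAt (by norm_num)
  -- clean pointwise equations
  have Emass : ∀ q ∈ dom T, pd (1,0,0) B q + (pd (0,1,0) B q * vS1 q + B q * pd (0,1,0) vS1 q)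
      + (pd (0,0,1) B q * vS2 q + B q * pd (0,0,1) vS2 q) = ΓB q := by
    intro q hq
    have h := hmass q hq
    rw [pd_mul _ (dB q hq) (dS1 q hq), pd_mul _ (dB q hq) (dS2 q hq)] at h
    exact h
  have Emass' : ∀ q ∈ dom T, pd (1,0,0) B q + (pd (0,0,1) B q * vS2 q + B q * pd (0,0,1) vS2 q)
      + (pd (0,1,0) B q * vS1 q + B q * pd (0,1,0) vS1 q) = ΓB q := by
    intro q hq; linear_combination Emass q hq
  have ES1 : ∀ q ∈ dom T, B q * pd (1,0,0) vS1 q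
      + B q * (vS1 q * pd (0,1,0) vS1 q + vS2 q * pd (0,0,1) vS1 q)
      + γ * pd (0,1,0) B q + B q * pd (0,1,0) P q = (M + ΓB q) * (vL1 q - vS1 q) := by
    intro q hq
    have h := hmomS1 q hq
    have hb : B q ≠ 0 := (hB0 q hq).ne'
    field_simp at h
    linear_combination h
  have ES2 : ∀ q ∈ dom T, B q * pd (1,0,0) vS2 q
      + B q * (vS2 q * pd (0,0,1) vS2 q + vS1 q * pd (0,1,0) vS2 q)
      + γ * pd (0,0,1) B q + B q * pd (0,0,1) P q = (M + ΓB q) * (vL2 q - vS2 q) := by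
    intro q hq
    have h := hmomS2 q hq
    have hb : B q ≠ 0 := (hB0 q hq).ne'
    field_simp at h
    linear_combination h
  have EL1 : ∀ q ∈ dom T, (1 - B q) * pd (1,0,0) vL1 q
      + (1 - B q) * (vL1 q * pd (0,1,0) vL1 q + vL2 q * pd (0,0,1) vL1 q)
      + (1 - B q) * pd (0,1,0) P q = M * (vS1 q - vL1 q) := by
    intro q hq
    have h := hmomL1 q hq
    have hb : (1 : ℝ) - B q ≠ 0 := sub_ne_zero.mpr (hB1 q hq).ne'
    field_simp at h
    linear_combination h
  have EL2 : ∀ q ∈ dom T, (1 - B q) * pd (1,0,0) vL2 q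
      + (1 - B q) * (vL2 q * pd (0,0,1) vL2 q + vL1 q * pd (0,1,0) vL2 q)
      + (1 - B q) * pd (0,0,1) P q = M * (vS2 q - vL2 q) := by
    intro q hq
    have h := hmomL2 q hq
    have hb : (1 : ℝ) - B q ≠ 0 := sub_ne_zero.mpr (hB1 q hq).ne'
    field_simp at h
    linear_combination h
  have Ediv : ∀ q ∈ dom T,
      (pd (0,1,0) B q * vS1 q + B q * pd (0,1,0) vS1 q - pd (0,1,0) B q * vL1 q
        + (1 - B q) * pd (0,1,0) vL1 q)
      + (pd (0,0,1) B q * vS2 q + B q * pd (0,0,1) vS2 q - pd (0,0,1) B q * vL2 q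
        + (1 - B q) * pd (0,0,1) vL2 q) = 0 := by
    intro q hq
    have h := hdiv q hq
    have h1 := dB q hq; have h2 := dS1 q hq; have h3 := dS2 q hq
    have h4 := dL1 q hq; have h5 := dL2 q hq
    simp (disch := fun_prop) only [pd_mul, pd_add, pd_sub, pd_const] at h
    linear_combination h
  have Ediv' : ∀ q ∈ dom T,
      (pd (0,0,1) B q * vS2 q + B q * pd (0,0,1) vS2 q - pd (0,0,1) B q * vL2 q
        + (1 - B q) * pd (0,0,1) vL2 q)
      + (pd (0,1,0) B q * vS1 q + B q * pd (0,1,0) vS1 q - pd (0,1,0) B q * vL1 q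
        + (1 - B q) * pd (0,1,0) vL1 q) = 0 := by
    intro q hq; linear_combination Ediv q hq
  intro p hp
  set W1 : ℝ × ℝ × ℝ → ℝ := fun r => B r * vS1 r + (1 - B r) * vL1 r with hW1def
  set W2 : ℝ × ℝ × ℝ → ℝ := fun r => B r * vS2 r + (1 - B r) * vL2 r with hW2def
  set K11 : ℝ × ℝ × ℝ → ℝ := fun r => B r * (1 - B r) * (vS1 r - vL1 r) * (vS1 r - vL1 r)
    with hK11def
  set K12 : ℝ × ℝ × ℝ → ℝ := fun r => B r * (1 - B r) * (vS1 r - vL1 r) * (vS2 r - vL2 r)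
    with hK12def
  set K21 : ℝ × ℝ × ℝ → ℝ := fun r => B r * (1 - B r) * (vS2 r - vL2 r) * (vS1 r - vL1 r)
    with hK21def
  set K22 : ℝ × ℝ × ℝ → ℝ := fun r => B r * (1 - B r) * (vS2 r - vL2 r) * (vS2 r - vL2 r)
    with hK22def
  -- the two momentum identities in conservative form
  have hF1 : ∀ q ∈ dom T,
      pd (1,0,0) W1 q + pd (0,1,0) (fun r => W1 r * W1 r) q + pd (0,1,0) K11 q
      + pd (0,0,1) (fun r => W2 r * W1 r) q + pd (0,0,1) K21 q
      + γ * pd (0,1,0) B q + pd (0,1,0) P q = 0 := fun q hq =>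
    auxF (1,0,0) (0,1,0) (0,0,1) γ M B vS1 vS2 vL1 vL2 P ΓB q (dB q hq) (dS1 q hq)
      (dS2 q hq) (dL1 q hq) (dL2 q hq) (Emass q hq) (ES1 q hq) (EL1 q hq) (Ediv q hq)
  have hF2 : ∀ q ∈ dom T,
      pd (1,0,0) W2 q + pd (0,0,1) (fun r => W2 r * W2 r) q + pd (0,0,1) K22 q
      + pd (0,1,0) (fun r => W1 r * W2 r) q + pd (0,1,0) K12 q
      + γ * pd (0,0,1) B q + pd (0,0,1) P q = 0 := fun q hq =>
    auxF (1,0,0) (0,0,1) (0,1,0) γ M B vS2 vS1 vL2 vL1 P ΓB q (dB q hq) (dS2 q hq)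
      (dS1 q hq) (dL2 q hq) (dL1 q hq) (Emass' q hq) (ES2 q hq) (EL2 q hq) (Ediv' q hq)
  -- regularity of composite functions at p
  have cdBp2 : ContDiffAt ℝ 2 B p := (cdB p hp).of_le (by norm_num)
  have cdPp2 : ContDiffAt ℝ 2 P p := (cdP p hp).of_le (by norm_num)
  have cdW1p2 : ContDiffAt ℝ 2 W1 p := by
    rw [hW1def]
    exact (((cdB p hp).mul (cdS1 p hp)).add
      ((contDiffAt_const.sub (cdB p hp)).mul (cdL1 p hp))).of_le (by norm_num)
  have cdW2p2 : ContDiffAt ℝ 2 W2 p := by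
    rw [hW2def]
    exact (((cdB p hp).mul (cdS2 p hp)).add
      ((contDiffAt_const.sub (cdB p hp)).mul (cdL2 p hp))).of_le (by norm_num)
  have cdZ1p2 : ContDiffAt ℝ 2 (fun r => vS1 r - vL1 r) p :=
    ((cdS1 p hp).sub (cdL1 p hp)).of_le (by norm_num)
  have cdZ2p2 : ContDiffAt ℝ 2 (fun r => vS2 r - vL2 r) p :=
    ((cdS2 p hp).sub (cdL2 p hp)).of_le (by norm_num)
  have cdBBp2 : ContDiffAt ℝ 2 (fun r => B r * (1 - B r)) p :=
    (cdBp2.mul (contDiffAt_const.sub cdBp2))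
  have cdK11p2 : ContDiffAt ℝ 2 K11 p := by
    rw [hK11def]; exact (cdBBp2.mul cdZ1p2).mul cdZ1p2
  have cdK12p2 : ContDiffAt ℝ 2 K12 p := by
    rw [hK12def]; exact (cdBBp2.mul cdZ1p2).mul cdZ2p2
  have cdK21p2 : ContDiffAt ℝ 2 K21 p := by
    rw [hK21def]; exact (cdBBp2.mul cdZ2p2).mul cdZ1p2
  have cdK22p2 : ContDiffAt ℝ 2 K22 p := by
    rw [hK22def]; exact (cdBBp2.mul cdZ2p2).mul cdZ2p2
  have dW1 : ∀ q ∈ dom T, DifferentiableAt ℝ W1 q := by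
    intro q hq; rw [hW1def]
    exact ((dB q hq).mul (dS1 q hq)).add
      (((differentiableAt_const 1).sub (dB q hq)).mul (dL1 q hq))
  have dW2 : ∀ q ∈ dom T, DifferentiableAt ℝ W2 q := by
    intro q hq; rw [hW2def]
    exact ((dB q hq).mul (dS2 q hq)).add
      (((differentiableAt_const 1).sub (dB q hq)).mul (dL2 q hq))
  -- differentiability of the first-derivative functions at p
  have hd1 : DifferentiableAt ℝ (pd (1,0,0) W1) p := diff_pd _ cdW1p2
  have hd1' : DifferentiableAt ℝ (pd (1,0,0) W2) p := diff_pd _ cdW2p2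
  have hd2 : DifferentiableAt ℝ (pd (0,1,0) (fun r => W1 r * W1 r)) p :=
    diff_pd _ (cdW1p2.mul cdW1p2)
  have hd2' : DifferentiableAt ℝ (pd (0,0,1) (fun r => W2 r * W2 r)) p :=
    diff_pd _ (cdW2p2.mul cdW2p2)
  have hd3 : DifferentiableAt ℝ (pd (0,1,0) K11) p := diff_pd _ cdK11p2
  have hd3' : DifferentiableAt ℝ (pd (0,0,1) K22) p := diff_pd _ cdK22p2
  have hd4 : DifferentiableAt ℝ (pd (0,0,1) (fun r => W2 r * W1 r)) p :=
    diff_pd _ (cdW2p2.mul cdW1p2)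
  have hd4' : DifferentiableAt ℝ (pd (0,1,0) (fun r => W1 r * W2 r)) p :=
    diff_pd _ (cdW1p2.mul cdW2p2)
  have hd5 : DifferentiableAt ℝ (pd (0,0,1) K21) p := diff_pd _ cdK21p2
  have hd5' : DifferentiableAt ℝ (pd (0,1,0) K12) p := diff_pd _ cdK12p2
  have hd6 : DifferentiableAt ℝ (pd (0,1,0) B) p := diff_pd _ cdBp2
  have hd6' : DifferentiableAt ℝ (pd (0,0,1) B) p := diff_pd _ cdBp2
  have hd7 : DifferentiableAt ℝ (pd (0,1,0) P) p := diff_pd _ cdPp2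
  have hd7' : DifferentiableAt ℝ (pd (0,0,1) P) p := diff_pd _ cdPp2
  have hdW1x : DifferentiableAt ℝ (pd (0,1,0) W1) p := diff_pd _ cdW1p2
  have hdW2y : DifferentiableAt ℝ (pd (0,0,1) W2) p := diff_pd _ cdW2p2
  -- take x-derivative of F1 and y-derivative of F2
  have E1 : pd (0,1,0) (fun q =>
      pd (1,0,0) W1 q + pd (0,1,0) (fun r => W1 r * W1 r) q + pd (0,1,0) K11 q
      + pd (0,0,1) (fun r => W2 r * W1 r) q + pd (0,0,1) K21 q
      + γ * pd (0,1,0) B q + pd (0,1,0) P q) p = 0 :=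
    pd_zero_ev _ (Filter.eventually_of_mem (hO.mem_nhds hp) (fun q hq => hF1 q hq))
  have E2 : pd (0,0,1) (fun q =>
      pd (1,0,0) W2 q + pd (0,0,1) (fun r => W2 r * W2 r) q + pd (0,0,1) K22 q
      + pd (0,1,0) (fun r => W1 r * W2 r) q + pd (0,1,0) K12 q
      + γ * pd (0,0,1) B q + pd (0,0,1) P q) p = 0 :=
    pd_zero_ev _ (Filter.eventually_of_mem (hO.mem_nhds hp) (fun q hq => hF2 q hq))
  simp (disch := fun_prop) only [pd_add, pd_const_mul] at E1 E2
  rw [pd_pd_mul hO hp (0,1,0) (0,1,0) dW1 dW1 cdW1p2 cdW1p2,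
      pd_pd_mul hO hp (0,1,0) (0,0,1) dW2 dW1 cdW2p2 cdW1p2,
      pd_comm (0,1,0) (1,0,0) cdW1p2, pd_comm (0,1,0) (0,0,1) cdW1p2] at E1
  rw [pd_pd_mul hO hp (0,0,1) (0,0,1) dW2 dW2 cdW2p2 cdW2p2,
      pd_pd_mul hO hp (0,0,1) (0,1,0) dW1 dW2 cdW1p2 cdW2p2,
      pd_comm (0,0,1) (1,0,0) cdW2p2, pd_comm (0,0,1) (0,1,0) cdW2p2] at E2
  -- divergence-free facts
  have hdivev : (fun q => pd (0,1,0) W1 q + pd (0,0,1) W2 q) =ᶠ[𝓝 p] (fun _ => 0) :=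
    Filter.eventually_of_mem (hO.mem_nhds hp) (fun q hq => hdiv q hq)
  have DX : pd (0,1,0) (pd (0,1,0) W1) p + pd (0,1,0) (pd (0,0,1) W2) p = 0 := by
    have h := pd_zero_ev (0,1,0) hdivev
    rwa [pd_add _ hdW1x hdW2y] at h
  have DY : pd (0,0,1) (pd (0,1,0) W1) p + pd (0,0,1) (pd (0,0,1) W2) p = 0 := by
    have h := pd_zero_ev (0,0,1) hdivev
    rwa [pd_add _ hdW1x hdW2y] at h
  have DT : pd (1,0,0) (pd (0,1,0) W1) p + pd (1,0,0) (pd (0,0,1) W2) p = 0 := by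
    have h := pd_zero_ev (1,0,0) hdivev
    rwa [pd_add _ hdW1x hdW2y] at h
  have D0 : pd (0,1,0) W1 p + pd (0,0,1) W2 p = 0 := hdiv p hp
  -- identify the symmetric off-diagonal stress terms
  have hKswap : K21 = K12 := by
    rw [hK21def, hK12def]; funext r; ring
  rw [hKswap] at E1 ⊢
  linear_combination E1 + E2 - (pd (0,1,0) W1 p + pd (0,0,1) W2 p) * D0
    - 2 * W1 p * DX - 2 * W2 p * DY - DT
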